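/- The parametrization of non-equilateral primitive Eisensteinian triplets is injective: if (m, n) and (m', n') are pairs of positive integers with m > n > 0, m' > n' > 0, gcd(m,n) = gcd(m',n') = 1, m ≢ n (mod 3), m' ≢ n' (mod 3), and the unordered pair of triples {(m²+mn+n², m²+2mn, n²+2mn), (m²+mn+n², m²+2mn, m²−n²)} equals the corresponding pair for (m', n'), then (m, n) = (m', n'). -/
import Mathlib

private lemma gilder_mod4 : ∀ M N A B : ZMod 4,
    A ^ 2 = B ^ 2 + N ^ 2 + 2 * M * N → M ^ 2 = N ^ 2 + B ^ 2 + 2 * A * B →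
    (M = 0 ∨ M = 2) ∧ (N = 0 ∨ N = 2) := by decide

private lemma gilder_even {m : ℤ} (h : (m : ZMod 4) = 0 ∨ (m : ZMod 4) = 2) : (2 : ℤ) ∣ m := by
  rcases h with h | h
  · have : (4 : ℤ) ∣ m := (ZMod.intCast_zmod_eq_zero_iff_dvd m 4).mp h
    omega
  · have h2 : ((m - 2 : ℤ) : ZMod 4) = 0 := by push_cast; rw [h]; ring
    have : (4 : ℤ) ∣ (m - 2) := (ZMod.intCast_zmod_eq_zero_iff_dvd (m - 2) 4).mp h2
    omega

/-- Gilder, injectivity: if two admissible parameter pairs `(m,n)`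
and `(m',n')` produce the same unordered pair of triples, then `(m,n) = (m',n')`. -/
theorem gilder_param_injective (m n m' n' : ℤ)
    (hn : 0 < n) (hnm : n < m) (hn' : 0 < n') (hnm' : n' < m')
    (hg : Int.gcd m n = 1) (hg' : Int.gcd m' n' = 1)
    (h3 : ¬ m ≡ n [ZMOD 3]) (h3' : ¬ m' ≡ n' [ZMOD 3])
    (h : ({(m ^ 2 + m * n + n ^ 2, m ^ 2 + 2 * m * n, n ^ 2 + 2 * m * n),
           (m ^ 2 + m * n + n ^ 2, m ^ 2 + 2 * m * n, m ^ 2 - n ^ 2)} : Set (ℤ × ℤ × ℤ)) =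
         {(m' ^ 2 + m' * n' + n' ^ 2, m' ^ 2 + 2 * m' * n', n' ^ 2 + 2 * m' * n'),
          (m' ^ 2 + m' * n' + n' ^ 2, m' ^ 2 + 2 * m' * n', m' ^ 2 - n' ^ 2)}) :
    m = m' ∧ n = n' := by
  rw [Set.pair_eq_pair_iff] at h
  simp only [Prod.mk.injEq] at h
  rcases h with ⟨⟨hp, hq, hr⟩, -⟩ | ⟨⟨hp, hq, hr⟩, ⟨-, -, hs⟩⟩
  · -- straight case
    have hmn : m * n = m' * n' := by nlinarith [hp, hq, hr]
    have hm2 : m ^ 2 = m' ^ 2 := by nlinarith [hq, hmn]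
    have hm : m = m' := by
      rcases mul_eq_zero.mp (show (m - m') * (m + m') = 0 by nlinarith [hm2]) with h | h
      · linarith
      · linarith
    refine ⟨hm, ?_⟩
    have h2 : m' * n = m' * n' := by rw [hm] at hmn; exact hmn
    exact mul_left_cancel₀ (show m' ≠ 0 by linarith) h2
  · -- cross case: contradiction mod 4
    exfalso
    -- hr : n^2 + 2mn = m'^2 - n'^2, hs : m^2 - n^2 = n'^2 + 2m'n'
    have E1 : (m' : ℤ) ^ 2 = n' ^ 2 + n ^ 2 + 2 * m * n := by linarith
    have E2 : (m : ℤ) ^ 2 = n ^ 2 + n' ^ 2 + 2 * m' * n' := by linarith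
    have E1' : ((m' : ZMod 4)) ^ 2 = (n' : ZMod 4) ^ 2 + (n : ZMod 4) ^ 2
        + 2 * (m : ZMod 4) * (n : ZMod 4) := by
      have := congrArg (Int.cast : ℤ → ZMod 4) E1
      push_cast at this
      exact this
    have E2' : ((m : ZMod 4)) ^ 2 = (n : ZMod 4) ^ 2 + (n' : ZMod 4) ^ 2
        + 2 * (m' : ZMod 4) * (n' : ZMod 4) := by
      have := congrArg (Int.cast : ℤ → ZMod 4) E2
      push_cast at this
      exact this
    obtain ⟨hM, hN⟩ := gilder_mod4 (m : ZMod 4) (n : ZMod 4) (m' : ZMod 4) (n' : ZMod 4) E1' E2'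
    have h2m : (2 : ℤ) ∣ m := gilder_even hM
    have h2n : (2 : ℤ) ∣ n := gilder_even hN
    have hcop : IsCoprime m n := Int.isCoprime_iff_gcd_eq_one.mpr hg
    have : IsUnit (2 : ℤ) := hcop.isUnit_of_dvd' h2m h2n
    rw [Int.isUnit_iff] at this
    omega
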